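/- arXiv:1310.1169 — 2 statements merged into one kernel-verified Lean document; each statement's English description precedes it below -/
import Mathlib

section
/- Let u : (0,∞) → [0,∞) be locally integrable with U(t) = ∫₀ᵗ u > 0 for all t > 0, and let v : (0,∞) → [0,∞) be measurable. Define σ(t) = ess sup_{s ∈ (0,t)} U(s) · ess sup_{τ ∈ (s,∞)} v(τ)/U(τ). Then σ(t) ≈ ess sup_{s ∈ (0,∞)} v(s) · U(t)/(U(s) + U(t)), with absolute constants in the equivalence. -/
open MeasureTheory Set

private lemma sigma_aux (W v : ℝ → ℝ)
    (hWpos : ∀ s, 0 < s → 0 < W s)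
    (hWmono : ∀ a b : ℝ, 0 < a → a ≤ b → W a ≤ W b)
    (hWcont : ∀ q, 0 < q → Filter.Tendsto W (nhdsWithin q (Ioo 0 q)) (nhds (W q)))
    (t : ℝ) (ht : 0 < t) :
    essSup (fun s => ENNReal.ofReal (v s) * ENNReal.ofReal (W t) /
        (ENNReal.ofReal (W s) + ENNReal.ofReal (W t))) (volume.restrict (Ioi (0:ℝ)))
      ≤ essSup (fun s => ENNReal.ofReal (W s) *
          essSup (fun τ => ENNReal.ofReal (v τ) / ENNReal.ofReal (W τ))
            (volume.restrict (Ioi s)))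
        (volume.restrict (Ioo (0:ℝ) t)) ∧
    essSup (fun s => ENNReal.ofReal (W s) *
          essSup (fun τ => ENNReal.ofReal (v τ) / ENNReal.ofReal (W τ))
            (volume.restrict (Ioi s)))
        (volume.restrict (Ioo (0:ℝ) t))
      ≤ 2 * essSup (fun s => ENNReal.ofReal (v s) * ENNReal.ofReal (W t) /
          (ENNReal.ofReal (W s) + ENNReal.ofReal (W t))) (volume.restrict (Ioi (0:ℝ))) := by
  set E : ℝ → ENNReal := fun s => ENNReal.ofReal (W s) with hE
  set g : ℝ → ENNReal := fun τ => ENNReal.ofReal (v τ) / E τ with hg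
  set F : ℝ → ENNReal := fun s => essSup g (volume.restrict (Ioi s)) with hF
  set term : ℝ → ENNReal :=
    fun s => ENNReal.ofReal (v s) * E t / (E s + E t) with hterm
  set σ : ENNReal := essSup (fun s => E s * F s) (volume.restrict (Ioo (0:ℝ) t)) with hσ
  set R : ENNReal := essSup term (volume.restrict (Ioi (0:ℝ))) with hR
  have hE0 : ∀ s, 0 < s → E s ≠ 0 := fun s hs =>
    (ENNReal.ofReal_pos.mpr (hWpos s hs)).ne'
  have hEtop : ∀ s, E s ≠ ⊤ := fun s => ENNReal.ofReal_ne_top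
  have hEmono : ∀ a b : ℝ, 0 < a → a ≤ b → E a ≤ E b := fun a b ha hab =>
    ENNReal.ofReal_le_ofReal (hWmono a b ha hab)
  have hFanti : ∀ a b : ℝ, a ≤ b → F b ≤ F a := by
    intro a b hab
    exact essSup_mono_measure (Measure.absolutelyContinuous_of_le
      (Measure.restrict_mono (Ioi_subset_Ioi hab) le_rfl))
  have hNB : ∀ q : ℝ, 0 < q → (nhdsWithin q (Ioo (0:ℝ) q)).NeBot := by
    intro q hq
    rw [← mem_closure_iff_nhdsWithin_neBot, closure_Ioo hq.ne]
    exact ⟨hq.le, le_refl q⟩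
  -- Key lemma A: left-continuity upgrade
  have keyA : ∀ q : ℝ, 0 < q → ∀ a L : ENNReal,
      (∀ s ∈ Ioo (0:ℝ) q, E s * a ≤ L) → E q * a ≤ L := by
    intro q hq a L h
    haveI := hNB q hq
    have h1 : Filter.Tendsto (fun s => E s * a) (nhdsWithin q (Ioo 0 q))
        (nhds (E q * a)) := by
      apply ENNReal.Tendsto.mul_const
      · exact (ENNReal.continuous_ofReal.tendsto _).comp (hWcont q hq)
      · exact Or.inl (hE0 q hq)
    refine le_of_tendsto h1 ?_
    exact Filter.eventually_iff.mpr (Filter.mem_of_superset self_mem_nhdsWithin h)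
  -- existence of good points in subintervals
  have hgood : ∀ (P : ℝ → Prop), (∀ᵐ x ∂volume.restrict (Ioo (0:ℝ) t), P x) →
      ∀ a b : ℝ, 0 ≤ a → a < b → b ≤ t → ∃ x ∈ Ioo a b, P x := by
    intro P hP a b ha hab hbt
    by_contra hcon
    push_neg at hcon
    have hnull : volume ({x | ¬ P x} ∩ Ioo (0:ℝ) t) = 0 := by
      have := ae_iff.mp hP
      rwa [Measure.restrict_apply' measurableSet_Ioo] at this
    have hsub : Ioo a b ⊆ {x | ¬ P x} ∩ Ioo (0:ℝ) t := by
      intro x hx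
      exact ⟨hcon x ⟨hx.1, hx.2⟩, ⟨lt_of_le_of_lt ha hx.1, lt_of_lt_of_le hx.2 hbt⟩⟩
    have : volume (Ioo a b) = 0 := measure_mono_null hsub hnull
    rw [Real.volume_Ioo] at this
    exact (ENNReal.ofReal_pos.mpr (by linarith)).ne' this
  -- C1 : for all q ∈ (0, t], E q * F q ≤ σ
  have hC1 : ∀ q : ℝ, 0 < q → q ≤ t → E q * F q ≤ σ := by
    intro q hq hqt
    apply keyA q hq
    intro s hs
    obtain ⟨x, hx, hxP⟩ := hgood (fun x => E x * F x ≤ σ)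
      (ae_le_essSup (f := fun s => E s * F s)) s q hs.1.le hs.2 hqt
    calc E s * F q ≤ E x * F x :=
          mul_le_mul' (hEmono s x hs.1 hx.1.le) (hFanti x q hx.2.le)
      _ ≤ σ := hxP
  -- C2
  have hC2 : ∀ q : ℝ, 0 < q → q ≤ t →
      ∀ᵐ τ ∂(volume : Measure ℝ), τ ∈ Ioi q →
        E q * ENNReal.ofReal (v τ) ≤ σ * E τ := by
    intro q hq hqt
    have h1 : ∀ᵐ τ ∂volume.restrict (Ioi q), g τ ≤ F q := ae_le_essSup
    refine (ae_imp_of_ae_restrict h1).mono ?_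
    intro τ hτ hτq
    have hτ0 : 0 < τ := lt_trans hq hτq
    have h2 : E q * (ENNReal.ofReal (v τ) / E τ) ≤ σ :=
      le_trans (mul_le_mul_right (hτ hτq) _) (hC1 q hq hqt)
    calc E q * ENNReal.ofReal (v τ)
        = E q * (ENNReal.ofReal (v τ) / E τ) * E τ := by
          rw [mul_assoc, ENNReal.div_mul_cancel (hE0 τ hτ0) (hEtop τ)]
      _ ≤ σ * E τ := mul_le_mul_left h2 _
  -- rational version
  have hrat : ∀ᵐ τ ∂(volume : Measure ℝ), ∀ q : ℚ, 0 < (q:ℝ) → (q:ℝ) ≤ t →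
      (q:ℝ) < τ → E q * ENNReal.ofReal (v τ) ≤ σ * E τ := by
    rw [ae_all_iff]
    intro q
    by_cases hq0 : 0 < (q:ℝ)
    · by_cases hqt : (q:ℝ) ≤ t
      · exact (hC2 q hq0 hqt).mono (fun τ h _ _ hτ => h hτ)
      · filter_upwards with τ h1 h2; exact absurd h2 hqt
    · filter_upwards with τ h1; exact absurd h1 hq0
  have hne : ∀ᵐ τ : ℝ ∂volume, τ ≠ t := by
    rw [ae_iff]
    have : {τ : ℝ | ¬ τ ≠ t} = {t} := by ext x; simp
    rw [this]
    exact measure_singleton t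
  -- lower bound: R ≤ σ
  have hRσ : R ≤ σ := by
    have hae : ∀ᵐ s ∂(volume : Measure ℝ), s ∈ Ioi (0:ℝ) → term s ≤ σ := by
      filter_upwards [hrat, hC2 t ht le_rfl, hne] with τ h1 h2 hτne hτ0
      have hτ0' : (0:ℝ) < τ := hτ0
      have hsum0 : E τ + E t ≠ 0 := by
        intro h
        exact hE0 t ht (add_eq_zero.mp h).2
      have hsumtop : E τ + E t ≠ ⊤ := ENNReal.add_ne_top.mpr ⟨hEtop τ, hEtop t⟩
      rcases lt_or_gt_of_ne hτne with hcase | hcase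
      · -- τ < t
        have hkey : E τ * ENNReal.ofReal (v τ) ≤ σ * E τ := by
          apply keyA τ hτ0'
          intro s hs
          obtain ⟨q, hq1, hq2⟩ := exists_rat_btwn hs.2
          have hq0 : 0 < (q:ℝ) := lt_trans hs.1 hq1
          have hqt : (q:ℝ) ≤ t := le_of_lt (lt_trans hq2 hcase)
          calc E s * ENNReal.ofReal (v τ) ≤ E q * ENNReal.ofReal (v τ) :=
                mul_le_mul_left (hEmono s q hs.1 hq1.le) _
            _ ≤ σ * E τ := h1 q hq0 hqt hq2
        have hx : ENNReal.ofReal (v τ) ≤ σ := by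
          rw [mul_comm] at hkey
          exact (ENNReal.mul_le_mul_iff_left (hE0 τ hτ0') (hEtop τ)).mp hkey
        refine le_trans ?_ hx
        rw [hterm, ENNReal.div_le_iff hsum0 hsumtop]
        exact mul_le_mul_right le_add_self _
      · -- t < τ
        have hkey : E t * ENNReal.ofReal (v τ) ≤ σ * E τ := h2 hcase
        calc term τ = ENNReal.ofReal (v τ) * E t / (E τ + E t) := rfl
          _ ≤ ENNReal.ofReal (v τ) * E t / E τ :=
              ENNReal.div_le_div_left le_self_add _
          _ = E t * ENNReal.ofReal (v τ) / E τ := by rw [mul_comm]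
          _ ≤ σ * E τ / E τ := ENNReal.div_le_div_right hkey _
          _ = σ := by
              rw [mul_div_assoc, ENNReal.div_self (hE0 τ (lt_trans ht hcase)) (hEtop τ),
                mul_one]
    refine essSup_le_of_ae_le _ ?_
    filter_upwards [ae_restrict_of_ae hae, ae_restrict_mem measurableSet_Ioi] with s h1 h2
    exact h1 h2
  -- upper bound: σ ≤ 2 R
  have hσR : σ ≤ 2 * R := by
    refine essSup_le_of_ae_le _ ?_
    filter_upwards [ae_restrict_mem measurableSet_Ioo] with s hs
    have key : ∀ᵐ τ ∂volume.restrict (Ioi s), E s * g τ ≤ 2 * term τ := by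
      filter_upwards [ae_restrict_mem measurableSet_Ioi] with τ hτ
      have hτ0 : 0 < τ := lt_trans hs.1 hτ
      have hsum0 : E τ + E t ≠ 0 := by
        intro h
        exact hE0 t ht (add_eq_zero.mp h).2
      have hsumtop : E τ + E t ≠ ⊤ := ENNReal.add_ne_top.mpr ⟨hEtop τ, hEtop t⟩
      set x := ENNReal.ofReal (v τ) with hx
      have hterm2 : 2 * term τ = 2 * (x * E t) / (E τ + E t) := by
        rw [hterm, mul_div_assoc]
      rcases le_total τ t with hcase | hcase
      · -- τ ≤ t
        have h1 : E s * g τ ≤ x := by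
          calc E s * g τ ≤ E τ * (x / E τ) :=
                mul_le_mul_left (hEmono s τ hs.1 (le_of_lt hτ)) _
            _ = x := ENNReal.mul_div_cancel (hE0 τ hτ0) (hEtop τ)
        refine le_trans h1 ?_
        rw [hterm2, ENNReal.le_div_iff_mul_le (Or.inl hsum0) (Or.inl hsumtop)]
        calc x * (E τ + E t) = x * E τ + x * E t := mul_add _ _ _
          _ ≤ x * E t + x * E t :=
              add_le_add_left (mul_le_mul_right (hEmono τ t hτ0 hcase) _) _
          _ = 2 * (x * E t) := (two_mul _).symm
      · -- t ≤ τ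
        have h1 : E s * g τ ≤ x * E t / E τ := by
          calc E s * g τ ≤ E t * (x / E τ) :=
                mul_le_mul_left (hEmono s t hs.1 (le_of_lt hs.2)) _
            _ = E t * x / E τ := (mul_div_assoc _ _ _).symm
            _ = x * E t / E τ := by rw [mul_comm (E t) x]
        refine le_trans h1 ?_
        rw [hterm2]
        calc x * E t / E τ = 2 * (x * E t) / (2 * E τ) :=
              (ENNReal.mul_div_mul_left _ _ two_ne_zero ENNReal.ofNat_ne_top).symm
          _ ≤ 2 * (x * E t) / (E τ + E t) := by
              apply ENNReal.div_le_div_left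
              calc E τ + E t ≤ E τ + E τ :=
                    add_le_add_right (hEmono t τ ht hcase) _
                _ = 2 * E τ := (two_mul _).symm
    calc E s * F s = essSup (fun τ => E s * g τ) (volume.restrict (Ioi s)) :=
          ENNReal.essSup_const_mul.symm
      _ ≤ essSup (fun τ => 2 * term τ) (volume.restrict (Ioi s)) := essSup_mono_ae key
      _ = 2 * essSup term (volume.restrict (Ioi s)) := ENNReal.essSup_const_mul
      _ ≤ 2 * R := by
          apply mul_le_mul_right
          exact essSup_mono_measure (Measure.absolutelyContinuous_of_le
            (Measure.restrict_mono (Ioi_subset_Ioi hs.1.le) le_rfl))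
  exact ⟨hRσ, hσR⟩

theorem sigma_equiv :
    ∃ c₁ > (0 : ℝ), ∃ c₂ > (0 : ℝ), ∀ u v : ℝ → ℝ,
      Measurable u → (∀ x, 0 ≤ u x) → Measurable v → (∀ x, 0 ≤ v x) →
      (∀ t > (0 : ℝ), IntegrableOn u (Ioc (0 : ℝ) t)) →
      (∀ t > (0 : ℝ), 0 < ∫ s in Ioc (0 : ℝ) t, u s) →
      ∀ t > (0 : ℝ),
        ENNReal.ofReal c₁ *
          essSup (fun s => ENNReal.ofReal (v s) *
              ENNReal.ofReal (∫ x in Ioc (0 : ℝ) t, u x) /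
              (ENNReal.ofReal (∫ x in Ioc (0 : ℝ) s, u x) +
                ENNReal.ofReal (∫ x in Ioc (0 : ℝ) t, u x)))
            (volume.restrict (Ioi (0 : ℝ)))
          ≤ essSup (fun s => ENNReal.ofReal (∫ x in Ioc (0 : ℝ) s, u x) *
              essSup (fun τ => ENNReal.ofReal (v τ) /
                  ENNReal.ofReal (∫ x in Ioc (0 : ℝ) τ, u x))
                (volume.restrict (Ioi s)))
              (volume.restrict (Ioo (0 : ℝ) t)) ∧
        essSup (fun s => ENNReal.ofReal (∫ x in Ioc (0 : ℝ) s, u x) *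
            essSup (fun τ => ENNReal.ofReal (v τ) /
                ENNReal.ofReal (∫ x in Ioc (0 : ℝ) τ, u x))
              (volume.restrict (Ioi s)))
            (volume.restrict (Ioo (0 : ℝ) t))
          ≤ ENNReal.ofReal c₂ *
            essSup (fun s => ENNReal.ofReal (v s) *
                ENNReal.ofReal (∫ x in Ioc (0 : ℝ) t, u x) /
                (ENNReal.ofReal (∫ x in Ioc (0 : ℝ) s, u x) +
                  ENNReal.ofReal (∫ x in Ioc (0 : ℝ) t, u x)))
              (volume.restrict (Ioi (0 : ℝ))) := by
  refine ⟨1, one_pos, 2, two_pos, ?_⟩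
  intro u v hu hu0 hv hv0 hint hpos t ht
  have hmono : ∀ a b : ℝ, 0 < a → a ≤ b →
      (∫ x in Ioc (0:ℝ) a, u x) ≤ ∫ x in Ioc (0:ℝ) b, u x := by
    intro a b ha hab
    have hb : 0 < b := lt_of_lt_of_le ha hab
    apply setIntegral_mono_set (hint b hb)
    · exact Filter.Eventually.of_forall (fun x => hu0 x)
    · exact HasSubset.Subset.eventuallyLE (Ioc_subset_Ioc le_rfl hab)
  have hcont : ∀ q, 0 < q → Filter.Tendsto (fun s => ∫ x in Ioc (0:ℝ) s, u x)
      (nhdsWithin q (Ioo 0 q)) (nhds (∫ x in Ioc (0:ℝ) q, u x)) := by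
    intro q hq
    have hrs : volume.restrict (Icc (0:ℝ) q) = volume.restrict (Ioc (0:ℝ) q) :=
      (Measure.restrict_congr_set Ioc_ae_eq_Icc).symm
    have hInt : IntegrableOn u (Icc (0:ℝ) q) := by
      rw [IntegrableOn, hrs]; exact hint q hq
    have h2 : ContinuousWithinAt (fun s => ∫ x in Ioc (0:ℝ) s, u x) (Icc 0 q) q :=
      intervalIntegral.continuousOn_primitive hInt q (right_mem_Icc.mpr hq.le)
    exact h2.mono Ioo_subset_Icc_self
  have h := sigma_aux (fun s => ∫ x in Ioc (0:ℝ) s, u x) v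
    (fun s hs => hpos s hs) hmono hcont t ht
  constructor
  · simpa using h.1
  · simpa using h.2
end

section
/- Let 1 < p < ∞, p' = p/(p-1). Define for t > 0: ζ(t) = t f**(t) + Ψ_p(t) ( ∫ₜ^∞ (s f**(s)/Ψ_p(s)^p)^{1/(p-1)} f*(s) ds )^{1/p'} and ζ₁(t) = Ψ_p(t) ( ∫ₜ^∞ (s f**(s)/Ψ_p(s)^p)^{p'} ψ(s)^p ds )^{1/p'}. Then ζ(t) ≈ ζ₁(t) for all t > 0, with constants depending only on p, under the assumptions Ψ_p(t) ∈ (0,∞), Ψ_p(∞) = ∞, and lim_{s→∞} (s f**(s))^{p'} Ψ_p(s)^{-p'} = 0. -/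
open MeasureTheory Set
open Filter Topology
open scoped NNReal

theorem rpow_tangent {r x y : ℝ} (hr : 1 < r) (hx : 0 ≤ x) (hxy : x ≤ y) :
    y ^ r - x ^ r ≤ r * y ^ (r - 1) * (y - x) := by
  rcases eq_or_lt_of_le (hx.trans hxy) with h | hy
  · have hy0 : y = 0 := h.symm
    have hx0 : x = 0 := le_antisymm (hy0 ▸ hxy) hx
    simp [hy0, hx0]
  · have hs : (-1 : ℝ) ≤ x / y - 1 := by
      have : 0 ≤ x / y := div_nonneg hx hy.le
      linarith
    have hb := one_add_mul_self_le_rpow_one_add hs hr.le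
    rw [add_sub_cancel] at hb
    rw [Real.div_rpow hx hy.le r] at hb
    have hyr : (0:ℝ) < y ^ r := Real.rpow_pos_of_pos hy r
    have h2 : (1 + r * (x / y - 1)) * y ^ r ≤ x ^ r := by
      calc (1 + r * (x / y - 1)) * y ^ r ≤ (x ^ r / y ^ r) * y ^ r :=
            mul_le_mul_of_nonneg_right hb hyr.le
        _ = x ^ r := by field_simp
    have hyq : y ^ r = y ^ (r - 1) * y := by
      rw [← Real.rpow_add_one hy.ne' (r-1)]; ring_nf
    have h3 : (1 + r * (x / y - 1)) * y ^ r = y ^ r + r * (x - y) * y ^ (r - 1) := by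
      rw [hyq]; field_simp
    rw [h3] at h2
    linarith

theorem rpow_subadd {x y c : ℝ} (hx : 0 ≤ x) (hy : 0 ≤ y) (hc : 0 ≤ c) (hc1 : c ≤ 1) :
    (x + y) ^ c ≤ x ^ c + y ^ c := by
  have h := NNReal.rpow_add_le_add_rpow x.toNNReal y.toNNReal hc hc1
  have hxy : ((x.toNNReal + y.toNNReal : ℝ≥0) : ℝ) = x + y := by
    push_cast; simp [Real.coe_toNNReal, hx, hy]
  calc (x + y) ^ c = (((x.toNNReal + y.toNNReal : ℝ≥0) : ℝ)) ^ c := by rw [hxy]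
    _ = (((x.toNNReal + y.toNNReal) ^ c : ℝ≥0) : ℝ) := by rw [← NNReal.coe_rpow]
    _ ≤ ((x.toNNReal ^ c + y.toNNReal ^ c : ℝ≥0) : ℝ) := by exact_mod_cast h
    _ = x ^ c + y ^ c := by
        push_cast [← NNReal.coe_rpow]
        simp [Real.coe_toNNReal, hx, hy]

theorem geom_bound {θ : ℝ} (h0 : 0 ≤ θ) (h1 : θ < 1) (n : ℕ) :
    ∑ i ∈ Finset.range n, θ ^ i ≤ 1 / (1 - θ) := by
  have h1θ : 0 < 1 - θ := by linarith
  rw [geom_sum_eq (ne_of_lt h1) n]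
  have heq : (θ ^ n - 1) / (θ - 1) = (1 - θ ^ n) / (1 - θ) := by
    rw [← neg_div_neg_eq]; ring_nf
  rw [heq, div_le_div_iff₀ h1θ h1θ]
  have := pow_nonneg h0 n
  nlinarith

theorem chain_int (f : ℝ → ℝ) (t : ℝ) (v : ℕ → ℝ) (hvt : ∀ n, t ≤ v n)
    (hvmono : Monotone v)
    (hfint : ∀ a b : ℝ, t ≤ a → a ≤ b → IntegrableOn f (Ioc a b))
    (m N : ℕ) :
    ∫ s in Ioc (v m) (v (m+N)), f s
      = ∑ k ∈ Finset.range N, ∫ s in Ioc (v (m+k)) (v (m+k+1)), f s := by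
  induction N with
  | zero => simp
  | succ N ih =>
    rw [Finset.sum_range_succ, ← ih, show m + (N+1) = m + N + 1 by omega]
    have h1 : v m ≤ v (m+N) := hvmono (by omega)
    have h2 : v (m+N) ≤ v (m+N+1) := hvmono (by omega)
    rw [← Ioc_union_Ioc_eq_Ioc h1 h2, setIntegral_union (Ioc_disjoint_Ioc_of_le le_rfl)
      measurableSet_Ioc (hfint _ _ (hvt m) h1) (hfint _ _ (hvt (m+N)) h2)]

theorem keyL1 (p : ℝ) (hp : 1 < p) (fs F : ℝ → ℝ) (t : ℝ) (ht : 0 < t)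
    (hfs0 : ∀ x ∈ Ioi (0:ℝ), 0 ≤ fs x)
    (hfsint : ∀ u > (0:ℝ), IntegrableOn fs (Ioc (0:ℝ) u))
    (hF0 : ∀ s, 0 ≤ F s)
    (hFadd : ∀ a b : ℝ, 0 < a → a ≤ b → F a + ∫ s in Ioc a b, fs s = F b)
    (hFmono : Monotone F) (hFmeas : Measurable F)
    (hFcont : ∀ b : ℝ, 0 < b → ContinuousOn F (Icc 0 b))
    (a b : ℝ) (hta : t ≤ a) (hab : a ≤ b) :
    F b ^ (p/(p-1)) - F a ^ (p/(p-1)) ≤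
      (p/(p-1)) * 2 ^ (p/(p-1)) * ∫ s in Ioc a b, F s ^ (1/(p-1)) * fs s := by
  set r := p/(p-1) with hrdef
  set q := 1/(p-1) with hqdef
  have hp1 : 0 < p - 1 := by linarith
  have hr1 : 1 < r := by rw [hrdef]; rw [lt_div_iff₀ hp1]; linarith
  have hrq : r - 1 = q := by rw [hrdef, hqdef]; field_simp; ring
  have hq0 : 0 < q := by rw [hqdef]; positivity
  have ha0 : 0 < a := ht.trans_le hta
  have hb0 : 0 < b := ha0.trans_le hab
  have hint : ∀ a' : ℝ, a ≤ a' → IntegrableOn (fun s => F s ^ q * fs s) (Ioc a' b) := by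
    intro a' ha'
    have hfsi : IntegrableOn fs (Ioc a' b) :=
      (hfsint b hb0).mono_set (Ioc_subset_Ioc (ha0.le.trans ha') le_rfl)
    refine Integrable.mono' (hfsi.const_mul (F b ^ q))
      ((((Real.continuous_rpow_const hq0.le).measurable.comp hFmeas).aestronglyMeasurable).mul
        hfsi.aestronglyMeasurable) ?_
    refine (ae_restrict_iff' measurableSet_Ioc).2 (Eventually.of_forall ?_)
    intro s hs
    have hfss : 0 ≤ fs s := hfs0 s (lt_of_le_of_lt ha0.le (lt_of_le_of_lt ha' hs.1))
    rw [Real.norm_eq_abs, abs_of_nonneg (mul_nonneg (Real.rpow_nonneg (hF0 s) q) hfss)]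
    exact mul_le_mul_of_nonneg_right
      (Real.rpow_le_rpow (hF0 s) (hFmono hs.2) hq0.le) hfss
  have hnn : ∀ a' : ℝ, a ≤ a' → 0 ≤ ∫ s in Ioc a' b, F s ^ q * fs s := by
    intro a' ha'
    refine setIntegral_nonneg measurableSet_Ioc fun s hs => ?_
    exact mul_nonneg (Real.rpow_nonneg (hF0 s) q)
      (hfs0 s (lt_of_le_of_lt (ha0.le.trans ha') hs.1))
  rcases eq_or_lt_of_le (hF0 b) with hFb | hFb
  · have h1 : F b ^ r = 0 := by rw [← hFb]; exact Real.zero_rpow (by positivity)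
    have h2 : F a = 0 := le_antisymm (hFb ▸ hFmono hab) (hF0 a)
    rw [h1, h2, Real.zero_rpow (by positivity : r ≠ 0)]
    have h3 := hnn a le_rfl
    have h4 : (0:ℝ) ≤ r * 2 ^ r := by positivity
    nlinarith [mul_nonneg h4 h3]
  rcases le_or_gt (F b / 2) (F a) with hcase | hcase
  · have hFi : F b ^ r - F a ^ r ≤ r * F b ^ q * (F b - F a) := by
      have := rpow_tangent hr1 (hF0 a) (hFmono hab)
      rw [hrq] at this; linarith
    have hlow : F b ^ q * (F b - F a) ≤ 2 ^ q * ∫ s in Ioc a b, F s ^ q * fs s := by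
      have hFba : F b - F a = ∫ s in Ioc a b, fs s := by
        rw [← hFadd a b ha0 hab]; ring
      have hstep : F a ^ q * (F b - F a) ≤ ∫ s in Ioc a b, F s ^ q * fs s := by
        rw [hFba, ← integral_const_mul]
        refine setIntegral_mono_on (((hfsint b hb0).mono_set
          (Ioc_subset_Ioc ha0.le le_rfl)).const_mul (F a ^ q)) (hint a le_rfl)
          measurableSet_Ioc ?_
        intro s hs
        exact mul_le_mul_of_nonneg_right
          (Real.rpow_le_rpow (hF0 a) (hFmono hs.1.le) hq0.le)
          (hfs0 s (ha0.trans hs.1))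
      have h2q : F b ^ q ≤ 2 ^ q * F a ^ q := by
        have : F b ≤ 2 * F a := by linarith [hcase]
        calc F b ^ q ≤ (2 * F a) ^ q := Real.rpow_le_rpow (hF0 b) this hq0.le
          _ = 2 ^ q * F a ^ q := Real.mul_rpow (by norm_num) (hF0 a)
      have hFbFa : 0 ≤ F b - F a := by linarith [hFmono hab]
      calc F b ^ q * (F b - F a) ≤ 2 ^ q * F a ^ q * (F b - F a) :=
            mul_le_mul_of_nonneg_right h2q hFbFa
        _ = 2 ^ q * (F a ^ q * (F b - F a)) := by ring
        _ ≤ 2 ^ q * ∫ s in Ioc a b, F s ^ q * fs s :=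
            mul_le_mul_of_nonneg_left hstep (Real.rpow_nonneg (by norm_num) q)
    have h2qr : (2:ℝ) ^ q ≤ 2 ^ r := by
      apply Real.rpow_le_rpow_of_exponent_le (by norm_num)
      rw [← hrq]; linarith
    have hr0 : (0:ℝ) < r := by linarith
    calc F b ^ r - F a ^ r ≤ r * F b ^ q * (F b - F a) := hFi
      _ = r * (F b ^ q * (F b - F a)) := by ring
      _ ≤ r * (2 ^ q * ∫ s in Ioc a b, F s ^ q * fs s) :=
          mul_le_mul_of_nonneg_left hlow hr0.le
      _ ≤ r * (2 ^ r * ∫ s in Ioc a b, F s ^ q * fs s) := by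
          apply mul_le_mul_of_nonneg_left _ hr0.le
          exact mul_le_mul_of_nonneg_right h2qr (hnn a le_rfl)
      _ = r * 2 ^ r * ∫ s in Ioc a b, F s ^ q * fs s := by ring
  · have hmem : F b / 2 ∈ Icc (F a) (F b) := ⟨hcase.le, by linarith⟩
    have hcont : ContinuousOn F (Icc a b) :=
      (hFcont b hb0).mono (Icc_subset_Icc ha0.le le_rfl)
    obtain ⟨m, hm, hFm⟩ := intermediate_value_Icc hab hcont hmem
    have hstep : F b ^ r / 2 ^ r ≤ ∫ s in Ioc m b, F s ^ q * fs s := by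
      have hFbm : F b - F m = ∫ s in Ioc m b, fs s := by
        rw [← hFadd m b (ha0.trans_le hm.1) hm.2]; ring
      have hlow : F m ^ q * (F b - F m) ≤ ∫ s in Ioc m b, F s ^ q * fs s := by
        rw [hFbm, ← integral_const_mul]
        refine setIntegral_mono_on (((hfsint b hb0).mono_set
          (Ioc_subset_Ioc (ha0.le.trans hm.1) le_rfl)).const_mul (F m ^ q)) (hint m hm.1)
          measurableSet_Ioc ?_
        intro s hs
        exact mul_le_mul_of_nonneg_right
          (Real.rpow_le_rpow (hF0 m) (hFmono hs.1.le) hq0.le)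
          (hfs0 s ((ha0.trans_le hm.1).trans hs.1))
      have heq : F m ^ q * (F b - F m) = F b ^ r / 2 ^ r := by
        rw [hFm]
        have h1 : F b - F b / 2 = F b / 2 := by ring
        rw [h1, Real.div_rpow (hF0 b) (by norm_num) q]
        rw [div_mul_div_comm, ← Real.rpow_add_one (by positivity : F b ≠ 0) q,
          ← Real.rpow_add_one (by norm_num : (2:ℝ) ≠ 0) q, hqdef]
        have : 1/(p-1) + 1 = r := by rw [hrdef]; field_simp; ring
        rw [this]
      rw [← heq]; exact hlow
    have hsub : ∫ s in Ioc m b, F s ^ q * fs s ≤ ∫ s in Ioc a b, F s ^ q * fs s := by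
      apply setIntegral_mono_set (hint a le_rfl)
      · refine (ae_restrict_iff' measurableSet_Ioc).2 (Eventually.of_forall ?_)
        intro s hs
        exact mul_nonneg (Real.rpow_nonneg (hF0 s) q) (hfs0 s (ha0.trans hs.1))
      · exact HasSubset.Subset.eventuallyLE (Ioc_subset_Ioc hm.1 le_rfl)
    have h2r : (0:ℝ) < 2 ^ r := Real.rpow_pos_of_pos (by norm_num) r
    have hr0 : (1:ℝ) ≤ r := hr1.le
    have hint0 := hnn a le_rfl
    have hbig : F b ^ r ≤ 2 ^ r * ∫ s in Ioc a b, F s ^ q * fs s := by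
      rw [← div_le_iff₀' h2r]
      exact hstep.trans hsub
    have hFar : 0 ≤ F a ^ r := Real.rpow_nonneg (hF0 a) r
    nlinarith [mul_nonneg (mul_nonneg (sub_nonneg.2 hr0) h2r.le) hint0]

theorem claimB_aux (p : ℝ) (hp : 1 < p) (F G ψp : ℝ → ℝ) (t u w : ℝ) (ht : 0 < t)
    (hF0 : ∀ s, 0 ≤ F s) (hFmono : Monotone F) (hGmono : Monotone G)
    (hGt : 0 < G t)
    (hGadd : ∀ a b : ℝ, 0 < a → a ≤ b → G a + ∫ s in Ioc a b, ψp s = G b)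
    (hψp0 : ∀ s, 0 ≤ ψp s)
    (hψpint : ∀ b > (0:ℝ), IntegrableOn ψp (Ioc (0:ℝ) b))
    (hI2int : IntegrableOn (fun s => (F s / G s) ^ (p/(p-1)) * ψp s) (Ioc u w))
    (htu : t ≤ u) (huw : u ≤ w) (hGw : G w = 2 * G u) :
    F u ^ (p/(p-1)) / G u ^ (1/(p-1))
      ≤ 2 ^ (p/(p-1)) * ∫ s in Ioc u w, (F s / G s) ^ (p/(p-1)) * ψp s := by
  set r := p/(p-1) with hrdef
  set q := 1/(p-1) with hqdef
  have hp1 : 0 < p - 1 := by linarith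
  have hrq : r = q + 1 := by rw [hrdef, hqdef]; field_simp; ring
  have hu0 : 0 < u := ht.trans_le htu
  have hw0 : 0 < w := hu0.trans_le huw
  have hGu : 0 < G u := hGt.trans_le (hGmono htu)
  have hψint : ∫ s in Ioc u w, ψp s = G u := by
    have := hGadd u w hu0 huw
    rw [hGw] at this; linarith
  set c := (F u / (2 * G u)) ^ r with hcdef
  have hc0 : 0 ≤ c := Real.rpow_nonneg (div_nonneg (hF0 u) (by positivity)) r
  have step1 : c * G u ≤ ∫ s in Ioc u w, (F s / G s) ^ r * ψp s := by
    have heq : c * G u = ∫ s in Ioc u w, c * ψp s := by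
      rw [integral_const_mul, hψint]
    rw [heq]
    refine setIntegral_mono_on (((hψpint w hw0).mono_set
      (Ioc_subset_Ioc hu0.le le_rfl)).const_mul c) hI2int measurableSet_Ioc ?_
    intro s hs
    have hGs : 0 < G s := hGt.trans_le (hGmono (htu.trans hs.1.le))
    have hGsw : G s ≤ 2 * G u := by rw [← hGw]; exact hGmono hs.2
    have hdiv : F u / (2 * G u) ≤ F s / G s :=
      div_le_div₀ (hF0 s) (hFmono hs.1.le) hGs hGsw
    exact mul_le_mul_of_nonneg_right
      (Real.rpow_le_rpow (div_nonneg (hF0 u) (by positivity)) hdiv (by positivity))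
      (hψp0 s)
  have step2 : F u ^ r / G u ^ q = 2 ^ r * (c * G u) := by
    rw [hcdef, Real.div_rpow (hF0 u) (by positivity),
      Real.mul_rpow (by norm_num : (0:ℝ) ≤ 2) hGu.le]
    have hGur : G u ^ r = G u ^ q * G u := by
      rw [hrq, Real.rpow_add_one hGu.ne']
    rw [hGur]
    have h2r : (0:ℝ) < 2 ^ r := Real.rpow_pos_of_pos (by norm_num) r
    have hGuq : (0:ℝ) < G u ^ q := Real.rpow_pos_of_pos hGu q
    field_simp
  rw [step2]
  exact mul_le_mul_of_nonneg_left step1 (Real.rpow_nonneg (by norm_num) r)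

theorem sumC_aux (θ S CL X c1 : ℝ) (A Φ e d B D : ℕ → ℝ)
    (hθ0 : 0 ≤ θ)
    (hA : ∀ k, A k ≤ c1 * Φ (k+1))
    (hΦ : ∀ k, Φ (k+1) ≤ X * e (k+1) + CL * (D (k+1) * e (k+1)))
    (hD : ∀ K, D K = ∑ j ∈ Finset.range K, d j)
    (he : ∀ n, e n = θ^n * e 0)
    (hde : ∀ j, d j * e j ≤ c1 * B j)
    (hBnn : ∀ j, 0 ≤ B j)
    (he0 : 0 ≤ e 0)
    (hX0 : 0 ≤ X) (hCL : 0 ≤ CL) (hc1 : 0 ≤ c1)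
    (hgeo : ∀ j N : ℕ, ∑ k ∈ Finset.Ico j N, θ^(k+1-j) ≤ S)
    (N : ℕ) :
    ∑ k ∈ Finset.range N, A k
      ≤ c1 * S * (X * e 0) + c1 * CL * (c1 * S * ∑ j ∈ Finset.range N, B j) := by
  have hS0 : 0 ≤ S := le_trans (by simp) (hgeo 0 0)
  have step1 : ∑ k ∈ Finset.range N, A k ≤
      c1 * X * ∑ k ∈ Finset.range N, e (k+1)
        + c1 * CL * ∑ k ∈ Finset.range N, D (k+1) * e (k+1) := by
    calc ∑ k ∈ Finset.range N, A k ≤ ∑ k ∈ Finset.range N, c1 * Φ (k+1) :=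
          Finset.sum_le_sum fun k _ => hA k
      _ ≤ ∑ k ∈ Finset.range N, c1 * (X * e (k+1) + CL * (D (k+1) * e (k+1))) :=
          Finset.sum_le_sum fun k _ => mul_le_mul_of_nonneg_left (hΦ k) hc1
      _ = _ := by
          rw [Finset.mul_sum, Finset.mul_sum, ← Finset.sum_add_distrib]
          exact Finset.sum_congr rfl fun k _ => by ring
  have step2 : ∑ k ∈ Finset.range N, e (k+1) ≤ S * e 0 := by
    calc ∑ k ∈ Finset.range N, e (k+1) = (∑ k ∈ Finset.range N, θ^(k+1)) * e 0 := by
          rw [Finset.sum_mul]; exact Finset.sum_congr rfl fun k _ => he (k+1)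
      _ ≤ S * e 0 := by
          apply mul_le_mul_of_nonneg_right _ he0
          have := hgeo 0 N
          rw [← Nat.Ico_zero_eq_range]
          simpa using this
  have step3 : ∑ k ∈ Finset.range N, D (k+1) * e (k+1)
      ≤ c1 * S * ∑ j ∈ Finset.range N, B j := by
    have hsplit : ∀ k, D (k+1) * e (k+1) = ∑ j ∈ Finset.range (k+1), d j * e (k+1) := by
      intro k; rw [hD (k+1), Finset.sum_mul]
    have hterm : ∀ k, ∀ j ∈ Finset.range (k+1), d j * e (k+1) ≤ θ^(k+1-j) * (c1 * B j) := by
      intro k j hj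
      have hjk : j ≤ k + 1 := by simp at hj; omega
      have hekk : e (k+1) = θ^(k+1-j) * e j := by
        rw [he (k+1), he j, ← mul_assoc, ← pow_add]
        congr 2
        omega
      calc d j * e (k+1) = θ^(k+1-j) * (d j * e j) := by rw [hekk]; ring
        _ ≤ θ^(k+1-j) * (c1 * B j) :=
            mul_le_mul_of_nonneg_left (hde j) (pow_nonneg hθ0 _)
    calc ∑ k ∈ Finset.range N, D (k+1) * e (k+1)
        ≤ ∑ k ∈ Finset.range N, ∑ j ∈ Finset.range (k+1), θ^(k+1-j) * (c1 * B j) := by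
          refine Finset.sum_le_sum fun k _ => ?_
          rw [hsplit k]
          exact Finset.sum_le_sum (hterm k)
      _ = ∑ j ∈ Finset.range N, ∑ k ∈ Finset.Ico j N, θ^(k+1-j) * (c1 * B j) := by
          rw [Finset.range_eq_Ico]
          rw [Finset.sum_Ico_Ico_comm]
          simp only [Finset.range_eq_Ico]
      _ ≤ ∑ j ∈ Finset.range N, S * (c1 * B j) := by
          refine Finset.sum_le_sum fun j _ => ?_
          rw [← Finset.sum_mul]
          exact mul_le_mul_of_nonneg_right (hgeo j N) (mul_nonneg hc1 (hBnn j))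
      _ = c1 * S * ∑ j ∈ Finset.range N, B j := by
          rw [Finset.mul_sum]
          exact Finset.sum_congr rfl fun j _ => by ring
  calc ∑ k ∈ Finset.range N, A k ≤ _ := step1
    _ ≤ c1 * X * (S * e 0) + c1 * CL * (c1 * S * ∑ j ∈ Finset.range N, B j) := by
        have h2 := mul_le_mul_of_nonneg_left step2 (mul_nonneg hc1 hX0)
        have h3 := mul_le_mul_of_nonneg_left step3 (mul_nonneg hc1 hCL)
        linarith
    _ = _ := by ring

set_option maxHeartbeats 1000000 in
theorem zeta_main (p : ℝ) (hp : 1 < p) (ψ fs : ℝ → ℝ)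
    (hψ0 : ∀ x, 0 ≤ ψ x)
    (hfs0 : ∀ x ∈ Ioi (0:ℝ), 0 ≤ fs x)
    (hfsint : ∀ u > (0:ℝ), IntegrableOn fs (Ioc (0:ℝ) u))
    (hψpint : ∀ u > (0:ℝ), IntegrableOn (fun x => ψ x ^ p) (Ioc (0:ℝ) u))
    (hGpos : ∀ u > (0:ℝ), 0 < ∫ x in Ioc (0:ℝ) u, ψ x ^ p)
    (hGtop : Filter.Tendsto (fun s => ∫ x in Ioc (0:ℝ) s, ψ x ^ p) Filter.atTop Filter.atTop)
    (hI1int : ∀ u > (0:ℝ), IntegrableOn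
      (fun s => ((∫ τ in Ioc (0:ℝ) s, fs τ) / (∫ x in Ioc (0:ℝ) s, ψ x ^ p))
        ^ (1 / (p - 1)) * fs s) (Ioi u))
    (hI2int : ∀ u > (0:ℝ), IntegrableOn
      (fun s => ((∫ τ in Ioc (0:ℝ) s, fs τ) / (∫ x in Ioc (0:ℝ) s, ψ x ^ p))
        ^ (p / (p - 1)) * ψ s ^ p) (Ioi u))
    (t : ℝ) (ht : 0 < t) :
    (((2:ℝ)^(1/(p-1)) * ((1/(2:ℝ)^(1/(p-1)))/(1 - 1/(2:ℝ)^(1/(p-1))))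
        + (2:ℝ)^(1/(p-1)) * ((p/(p-1)) * (2:ℝ)^(p/(p-1))) * (2:ℝ)^(1/(p-1))
          * ((1/(2:ℝ)^(1/(p-1)))/(1 - 1/(2:ℝ)^(1/(p-1))))) ^ ((p-1)/p))⁻¹ *
        ((∫ x in Ioc (0 : ℝ) t, ψ x ^ p) ^ (1 / p) *
          (∫ s in Ioi t, ((∫ τ in Ioc (0 : ℝ) s, fs τ) / (∫ x in Ioc (0 : ℝ) s, ψ x ^ p))
            ^ (p / (p - 1)) * ψ s ^ p) ^ ((p - 1) / p))
      ≤ (∫ τ in Ioc (0 : ℝ) t, fs τ) +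
          (∫ x in Ioc (0 : ℝ) t, ψ x ^ p) ^ (1 / p) *
            (∫ s in Ioi t, ((∫ τ in Ioc (0 : ℝ) s, fs τ) / (∫ x in Ioc (0 : ℝ) s, ψ x ^ p))
              ^ (1 / (p - 1)) * fs s) ^ ((p - 1) / p) ∧
      (∫ τ in Ioc (0 : ℝ) t, fs τ) +
          (∫ x in Ioc (0 : ℝ) t, ψ x ^ p) ^ (1 / p) *
            (∫ s in Ioi t, ((∫ τ in Ioc (0 : ℝ) s, fs τ) / (∫ x in Ioc (0 : ℝ) s, ψ x ^ p))
              ^ (1 / (p - 1)) * fs s) ^ ((p - 1) / p)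
        ≤ (((2:ℝ)^(p/(p-1)))^((p-1)/p) + ((2:ℝ)^(1/(p-1)) * (2:ℝ)^(p/(p-1)))^((p-1)/p)) *
            ((∫ x in Ioc (0 : ℝ) t, ψ x ^ p) ^ (1 / p) *
              (∫ s in Ioi t, ((∫ τ in Ioc (0 : ℝ) s, fs τ) / (∫ x in Ioc (0 : ℝ) s, ψ x ^ p))
                ^ (p / (p - 1)) * ψ s ^ p) ^ ((p - 1) / p)) := by
  have hp1 : 0 < p - 1 := by linarith
  have hp0 : 0 < p := by linarith
  -- fold the integral functions
  set F : ℝ → ℝ := fun s => ∫ τ in Ioc (0:ℝ) s, fs τ with hFdef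
  set G : ℝ → ℝ := fun s => ∫ x in Ioc (0:ℝ) s, ψ x ^ p with hGdef
  have hFs : ∀ s : ℝ, (∫ τ in Ioc (0:ℝ) s, fs τ) = F s := fun _ => rfl
  have hGs : ∀ s : ℝ, (∫ x in Ioc (0:ℝ) s, ψ x ^ p) = G s := fun _ => rfl
  simp only [hFs, hGs] at hGpos hI1int hI2int ⊢
  -- abbreviations
  set q := 1/(p-1) with hq
  set r := p/(p-1) with hr
  set pe := (p-1)/p with hpe
  have hq0 : 0 < q := by rw [hq]; positivity
  have hr1 : 1 < r := by rw [hr, lt_div_iff₀ hp1]; linarith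
  have hrq : r = q + 1 := by rw [hr, hq]; field_simp; ring
  have hpe0 : 0 < pe := by rw [hpe]; positivity
  have hpe1 : pe ≤ 1 := by rw [hpe, div_le_one hp0]; linarith
  have h2q1 : 1 < (2:ℝ) ^ q := by
    rw [show (1:ℝ) < (2:ℝ)^q ↔ _ from Real.one_lt_rpow_iff_of_pos (by norm_num)]
    left; exact ⟨by norm_num, hq0⟩
  have h2q0 : (0:ℝ) < 2 ^ q := by positivity
  have h2r0 : (0:ℝ) < 2 ^ r := Real.rpow_pos_of_pos (by norm_num) r
  set θ := 1/(2:ℝ)^q with hθ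
  have hθ0 : 0 < θ := by rw [hθ]; positivity
  have hθ1 : θ < 1 := by rw [hθ, div_lt_one h2q0]; exact h2q1
  set S := θ/(1-θ) with hS
  have hS0 : 0 < S := by rw [hS]; apply div_pos hθ0; linarith
  set CL := r * 2 ^ r with hCL
  have hCL0 : 0 < CL := by rw [hCL]; positivity
  -- basic facts about F and G
  have hF0 : ∀ s, 0 ≤ F s := fun s =>
    setIntegral_nonneg measurableSet_Ioc fun x hx => hfs0 x hx.1
  have hG0 : ∀ s, 0 ≤ G s := fun s =>
    setIntegral_nonneg measurableSet_Ioc fun x _ => Real.rpow_nonneg (hψ0 x) p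
  have hψp0 : ∀ s : ℝ, (0:ℝ) ≤ ψ s ^ p := fun s => Real.rpow_nonneg (hψ0 s) p
  have hFadd : ∀ a b : ℝ, 0 < a → a ≤ b → F a + ∫ s in Ioc a b, fs s = F b := by
    intro a b ha hab
    rw [hFdef]
    rw [← setIntegral_union ((Ioc_disjoint_Ioc_of_le le_rfl)) measurableSet_Ioc
      ((hfsint b (ha.trans_le hab)).mono_set (Ioc_subset_Ioc_right hab))
      ((hfsint b (ha.trans_le hab)).mono_set (Ioc_subset_Ioc_left ha.le)),
      Ioc_union_Ioc_eq_Ioc ha.le hab]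
  have hGadd : ∀ a b : ℝ, 0 < a → a ≤ b → G a + ∫ s in Ioc a b, ψ s ^ p = G b := by
    intro a b ha hab
    rw [hGdef]
    rw [← setIntegral_union ((Ioc_disjoint_Ioc_of_le le_rfl)) measurableSet_Ioc
      ((hψpint b (ha.trans_le hab)).mono_set (Ioc_subset_Ioc_right hab))
      ((hψpint b (ha.trans_le hab)).mono_set (Ioc_subset_Ioc_left ha.le)),
      Ioc_union_Ioc_eq_Ioc ha.le hab]
  have hFzero : ∀ s : ℝ, s ≤ 0 → F s = 0 := by
    intro s hs; rw [hFdef]; simp [Ioc_eq_empty_of_le hs]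
  have hGzero : ∀ s : ℝ, s ≤ 0 → G s = 0 := by
    intro s hs; rw [hGdef]; simp [Ioc_eq_empty_of_le hs]
  have hFmono : Monotone F := by
    intro a b hab
    rcases le_or_gt b 0 with hb | hb
    · rw [hFzero a (hab.trans hb), hFzero b hb]
    rcases le_or_gt a 0 with ha | ha
    · rw [hFzero a ha]; exact hF0 b
    · rw [← hFadd a b ha hab]
      have : 0 ≤ ∫ s in Ioc a b, fs s :=
        setIntegral_nonneg measurableSet_Ioc fun x hx => hfs0 x (ha.trans hx.1)
      linarith
  have hGmono : Monotone G := by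
    intro a b hab
    rcases le_or_gt b 0 with hb | hb
    · rw [hGzero a (hab.trans hb), hGzero b hb]
    rcases le_or_gt a 0 with ha | ha
    · rw [hGzero a ha]; exact hG0 b
    · rw [← hGadd a b ha hab]
      have : 0 ≤ ∫ s in Ioc a b, ψ s ^ p :=
        setIntegral_nonneg measurableSet_Ioc fun x _ => hψp0 x
      linarith
  have hFcont : ∀ b : ℝ, 0 < b → ContinuousOn F (Icc 0 b) := fun b hb =>
    intervalIntegral.continuousOn_primitive
      ((integrableOn_Icc_iff_integrableOn_Ioc).2 (hfsint b hb))
  have hGcont : ∀ b : ℝ, 0 < b → ContinuousOn G (Icc 0 b) := fun b hb =>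
    intervalIntegral.continuousOn_primitive
      ((integrableOn_Icc_iff_integrableOn_Ioc).2 (hψpint b hb))
  have hFmeas : Measurable F := hFmono.measurable
  have hGt : 0 < G t := hGpos t ht
  -- dyadic sequence
  have exG : ∀ u : ℝ, t ≤ u → ∃ w, u ≤ w ∧ G w = 2 * G u := by
    intro u hu
    have hGu : 0 < G u := hGt.trans_le (hGmono hu)
    obtain ⟨T, hT1, hT2⟩ := ((hGtop.eventually_ge_atTop (2 * G u)).and
      (eventually_ge_atTop u)).exists
    have hcont : ContinuousOn G (Icc u T) := by
      apply (hGcont T (lt_of_lt_of_le (ht.trans_le hu) hT2)).mono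
      exact Icc_subset_Icc (ht.trans_le hu).le le_rfl
    have hmem : 2 * G u ∈ Icc (G u) (G T) := ⟨by linarith, hT1⟩
    obtain ⟨w, hw, hGw⟩ := intermediate_value_Icc hT2 hcont hmem
    exact ⟨w, hw.1, hGw⟩
  classical
  set v : ℕ → ℝ := fun n => Nat.rec t
    (fun _ u => if h : t ≤ u then Classical.choose (exG u h) else t) n with hv
  have hv0 : v 0 = t := rfl
  have hvt : ∀ n, t ≤ v n := by
    intro n
    induction n with
    | zero => exact le_rfl
    | succ n ih =>
      show t ≤ (if h : t ≤ v n then Classical.choose (exG (v n) h) else t)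
      rw [dif_pos ih]
      exact ih.trans (Classical.choose_spec (exG (v n) ih)).1
  have hvadj : ∀ n, v n ≤ v (n+1) := by
    intro n
    show v n ≤ (if h : t ≤ v n then Classical.choose (exG (v n) h) else t)
    rw [dif_pos (hvt n)]
    exact (Classical.choose_spec (exG (v n) (hvt n))).1
  have hv2 : ∀ n, G (v (n+1)) = 2 * G (v n) := by
    intro n
    show G (if h : t ≤ v n then Classical.choose (exG (v n) h) else t) = 2 * G (v n)
    rw [dif_pos (hvt n)]
    exact (Classical.choose_spec (exG (v n) (hvt n))).2
  have hvmono : Monotone v := monotone_nat_of_le_succ hvadj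
  have hGv : ∀ n, G (v n) = 2 ^ n * G t := by
    intro n
    induction n with
    | zero => simp [hv0]
    | succ n ih => rw [hv2 n, ih, pow_succ]; ring
  have hGvk : ∀ n, 0 < G (v n) := fun n => hGt.trans_le (hGmono (hvt n))
  have hv0pos : ∀ n, 0 < v n := fun n => ht.trans_le (hvt n)
  have hcover : ∀ x : ℝ, t < x → ∃ N, x ≤ v N := by
    intro x hx
    obtain ⟨N, hN⟩ := pow_unbounded_of_one_lt (G x / G t) (by norm_num : (1:ℝ) < 2)
    refine ⟨N, ?_⟩
    by_contra hc
    push_neg at hc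
    have h1 : G (v N) ≤ G x := hGmono hc.le
    rw [hGv N] at h1
    have h2 : G x < 2 ^ N * G t := by
      rw [div_lt_iff₀ hGt] at hN; linarith
    linarith
  have hUnion : (⋃ n, Ioc t (v n)) = Ioi t := by
    apply Subset.antisymm
    · exact iUnion_subset fun n => Ioc_subset_Ioi_self
    · intro x hx
      obtain ⟨N, hN⟩ := hcover x hx
      exact mem_iUnion.2 ⟨N, hx, hN⟩
  -- integrability helpers
  have hI1Ioi := hI1int t ht
  have hI2Ioi := hI2int t ht
  have hIocIoi : ∀ a b : ℝ, t ≤ a → Ioc a b ⊆ Ioi t :=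
    fun a b hta x hx => lt_of_le_of_lt hta hx.1
  have hI1sub : ∀ a b : ℝ, t ≤ a → IntegrableOn (fun s => (F s / G s) ^ q * fs s) (Ioc a b) :=
    fun a b hta => hI1Ioi.mono_set (hIocIoi a b hta)
  have hI2sub : ∀ a b : ℝ, t ≤ a →
      IntegrableOn (fun s => (F s / G s) ^ r * ψ s ^ p) (Ioc a b) :=
    fun a b hta => hI2Ioi.mono_set (hIocIoi a b hta)
  have hfsub : ∀ a b : ℝ, 0 < a → a ≤ b → IntegrableOn fs (Ioc a b) :=
    fun a b ha hab => (hfsint b (ha.trans_le hab)).mono_set (Ioc_subset_Ioc ha.le le_rfl)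
  have hψpsub : ∀ a b : ℝ, 0 < a → a ≤ b → IntegrableOn (fun s => ψ s ^ p) (Ioc a b) :=
    fun a b ha hab => (hψpint b (ha.trans_le hab)).mono_set (Ioc_subset_Ioc ha.le le_rfl)
  have hFqfs : ∀ a b : ℝ, t ≤ a → a ≤ b →
      IntegrableOn (fun s => F s ^ q * fs s) (Ioc a b) := by
    intro a b hta hab
    have ha0 : 0 < a := ht.trans_le hta
    have hfsi : IntegrableOn fs (Ioc a b) := hfsub a b ha0 hab
    refine Integrable.mono' (hfsi.const_mul (F b ^ q))
      ((((Real.continuous_rpow_const hq0.le).measurable.comp hFmeas).aestronglyMeasurable).mul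
        hfsi.aestronglyMeasurable) ?_
    refine (ae_restrict_iff' measurableSet_Ioc).2 (Eventually.of_forall ?_)
    intro s hs
    have hfss : 0 ≤ fs s := hfs0 s (ha0.trans hs.1)
    rw [Real.norm_eq_abs, abs_of_nonneg (mul_nonneg (Real.rpow_nonneg (hF0 s) q) hfss)]
    exact mul_le_mul_of_nonneg_right
      (Real.rpow_le_rpow (hF0 s) (hFmono hs.2) hq0.le) hfss
  -- nonnegativity facts
  have hI2nn : ∀ s : ℝ, 0 ≤ (F s / G s) ^ r * ψ s ^ p :=
    fun s => mul_nonneg (Real.rpow_nonneg (div_nonneg (hF0 s) (hG0 s)) r) (hψp0 s)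
  have hI1nnIoi : ∀ s ∈ Ioi t, 0 ≤ (F s / G s) ^ q * fs s := fun s hs =>
    mul_nonneg (Real.rpow_nonneg (div_nonneg (hF0 s) (hG0 s)) q)
      (hfs0 s (ht.trans hs))
  set I1 := ∫ s in Ioi t, (F s / G s) ^ q * fs s with hI1
  set I2 := ∫ s in Ioi t, (F s / G s) ^ r * ψ s ^ p with hI2
  have hI1nn : 0 ≤ I1 := setIntegral_nonneg measurableSet_Ioi hI1nnIoi
  have hI2nn' : 0 ≤ I2 := setIntegral_nonneg measurableSet_Ioi fun s _ => hI2nn s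
  -- limit machinery
  have hlim : ∀ f : ℝ → ℝ, IntegrableOn f (Ioi t) →
      Tendsto (fun N => ∫ s in Ioc t (v N), f s) atTop (𝓝 (∫ s in Ioi t, f s)) := by
    intro f hf
    have h := tendsto_setIntegral_of_monotone (s := fun N => Ioc t (v N))
      (fun N => measurableSet_Ioc)
      (fun a b hab => Ioc_subset_Ioc le_rfl (hvmono hab))
      (by rw [hUnion]; exact hf)
    rwa [hUnion] at h
  -- claim B (local form)
  have claimB : ∀ u' w' : ℝ, t ≤ u' → u' ≤ w' → G w' = 2 * G u' →
      F u' ^ r / G u' ^ q ≤ 2 ^ r * ∫ s in Ioc u' w', (F s / G s) ^ r * ψ s ^ p :=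
    fun u' w' h1 h2 h3 =>
      claimB_aux p hp F G (fun s => ψ s ^ p) t u' w' ht hF0 hFmono hGmono hGt
        hGadd hψp0 hψpint (hI2sub u' w' h1) h1 h2 h3
  -- partial I2 bound by I2
  have hI2part : ∀ a b : ℝ, t ≤ a → (∫ s in Ioc a b, (F s / G s) ^ r * ψ s ^ p) ≤ I2 := by
    intro a b hta
    apply setIntegral_mono_set hI2Ioi (Eventually.of_forall fun s => hI2nn s)
    exact HasSubset.Subset.eventuallyLE (hIocIoi a b hta)
  -- block algebra
  have halg : ∀ k, (F (v (k+1)) / G (v k)) ^ q * F (v (k+1))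
      = 2 ^ q * (F (v (k+1)) ^ r / G (v (k+1)) ^ q) := by
    intro k
    have hY : 0 < G (v k) := hGvk k
    have hX : 0 ≤ F (v (k+1)) := hF0 _
    have hXr : F (v (k+1)) ^ r = F (v (k+1)) ^ q * F (v (k+1)) := by
      rw [hrq, Real.rpow_add' hX (by positivity), Real.rpow_one]
    rw [Real.div_rpow hX hY.le, hv2 k,
      Real.mul_rpow (by norm_num : (0:ℝ) ≤ 2) hY.le, hXr]
    have hYq : (0:ℝ) < G (v k) ^ q := Real.rpow_pos_of_pos hY q
    field_simp
  have halg2 : ∀ k, (F (v (k+1)) / G (v k)) ^ r * G (v k)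
      = 2 ^ q * (F (v (k+1)) ^ r / G (v (k+1)) ^ q) := by
    intro k
    have hY : 0 < G (v k) := hGvk k
    have hX : 0 ≤ F (v (k+1)) := hF0 _
    have hYr : G (v k) ^ r = G (v k) ^ q * G (v k) := by
      rw [hrq, Real.rpow_add_one hY.ne']
    rw [Real.div_rpow hX hY.le, hv2 k,
      Real.mul_rpow (by norm_num : (0:ℝ) ≤ 2) hY.le, hYr]
    have hYq : (0:ℝ) < G (v k) ^ q := Real.rpow_pos_of_pos hY q
    field_simp
  have hFdiff : ∀ k, ∫ s in Ioc (v k) (v (k+1)), fs s = F (v (k+1)) - F (v k) := by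
    intro k
    have := hFadd (v k) (v (k+1)) (hv0pos k) (hvadj k)
    linarith
  have hGdiff : ∀ k, ∫ s in Ioc (v k) (v (k+1)), ψ s ^ p = G (v k) := by
    intro k
    have h1 := hGadd (v k) (v (k+1)) (hv0pos k) (hvadj k)
    have h2 := hv2 k
    linarith
  -- block bound for I1 integrand
  have hblockA : ∀ k, (∫ s in Ioc (v k) (v (k+1)), (F s / G s) ^ q * fs s)
      ≤ 2 ^ q * (F (v (k+1)) ^ r / G (v (k+1)) ^ q) := by
    intro k
    have hstep : (∫ s in Ioc (v k) (v (k+1)), (F s / G s) ^ q * fs s)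
        ≤ ∫ s in Ioc (v k) (v (k+1)), (F (v (k+1)) / G (v k)) ^ q * fs s := by
      refine setIntegral_mono_on (hI1sub _ _ (hvt k))
        ((hfsub (v k) (v (k+1)) (hv0pos k) (hvadj k)).const_mul _) measurableSet_Ioc ?_
      intro s hs
      have hGsp : 0 < G s := hGt.trans_le (hGmono ((hvt k).trans hs.1.le))
      refine mul_le_mul_of_nonneg_right
        (Real.rpow_le_rpow (div_nonneg (hF0 s) hGsp.le) ?_ hq0.le)
        (hfs0 s ((hv0pos k).trans hs.1))
      exact div_le_div₀ (hF0 _) (hFmono hs.2) (hGvk k) (hGmono hs.1.le)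
    calc (∫ s in Ioc (v k) (v (k+1)), (F s / G s) ^ q * fs s) ≤ _ := hstep
      _ = (F (v (k+1)) / G (v k)) ^ q * (F (v (k+1)) - F (v k)) := by
          rw [integral_const_mul, hFdiff k]
      _ ≤ (F (v (k+1)) / G (v k)) ^ q * F (v (k+1)) := by
          refine mul_le_mul_of_nonneg_left (by linarith [hF0 (v k)]) ?_
          exact Real.rpow_nonneg (div_nonneg (hF0 _) (hGvk k).le) q
      _ = 2 ^ q * (F (v (k+1)) ^ r / G (v (k+1)) ^ q) := halg k
  -- block bound for I2 integrand
  have hblockC : ∀ k, (∫ s in Ioc (v k) (v (k+1)), (F s / G s) ^ r * ψ s ^ p)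
      ≤ 2 ^ q * (F (v (k+1)) ^ r / G (v (k+1)) ^ q) := by
    intro k
    have hstep : (∫ s in Ioc (v k) (v (k+1)), (F s / G s) ^ r * ψ s ^ p)
        ≤ ∫ s in Ioc (v k) (v (k+1)), (F (v (k+1)) / G (v k)) ^ r * ψ s ^ p := by
      refine setIntegral_mono_on (hI2sub _ _ (hvt k))
        ((hψpsub (v k) (v (k+1)) (hv0pos k) (hvadj k)).const_mul _) measurableSet_Ioc ?_
      intro s hs
      have hGsp : 0 < G s := hGt.trans_le (hGmono ((hvt k).trans hs.1.le))
      refine mul_le_mul_of_nonneg_right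
        (Real.rpow_le_rpow (div_nonneg (hF0 s) hGsp.le) ?_ (by positivity)) (hψp0 s)
      exact div_le_div₀ (hF0 _) (hFmono hs.2) (hGvk k) (hGmono hs.1.le)
    calc (∫ s in Ioc (v k) (v (k+1)), (F s / G s) ^ r * ψ s ^ p) ≤ _ := hstep
      _ = (F (v (k+1)) / G (v k)) ^ r * G (v k) := by
          rw [integral_const_mul, hGdiff k]
      _ = 2 ^ q * (F (v (k+1)) ^ r / G (v (k+1)) ^ q) := halg2 k
  -- CLAIM A : I1 ≤ 2^q * 2^r * I2
  have claimA : I1 ≤ 2 ^ q * 2 ^ r * I2 := by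
    have hN : ∀ N : ℕ, (∫ s in Ioc t (v N), (F s / G s) ^ q * fs s)
        ≤ 2 ^ q * 2 ^ r * I2 := by
      intro N
      have hchain1 : (∫ s in Ioc t (v N), (F s / G s) ^ q * fs s)
          = ∑ k ∈ Finset.range N, ∫ s in Ioc (v k) (v (k+1)), (F s / G s) ^ q * fs s := by
        have := chain_int (fun s => (F s / G s) ^ q * fs s) t v hvt hvmono
          (fun a b hta _ => hI1sub a b hta) 0 N
        simpa [hv0] using this
      have hchain2 : ∑ k ∈ Finset.range N,
            (∫ s in Ioc (v (k+1)) (v (k+2)), (F s / G s) ^ r * ψ s ^ p)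
          = ∫ s in Ioc (v 1) (v (1+N)), (F s / G s) ^ r * ψ s ^ p := by
        rw [chain_int (fun s => (F s / G s) ^ r * ψ s ^ p) t v hvt hvmono
          (fun a b hta _ => hI2sub a b hta) 1 N]
        refine Finset.sum_congr rfl fun k _ => ?_
        rw [show 1+k = k+1 by omega, show k+1+1 = k+2 by omega]
      calc (∫ s in Ioc t (v N), (F s / G s) ^ q * fs s)
          = ∑ k ∈ Finset.range N, ∫ s in Ioc (v k) (v (k+1)), (F s / G s) ^ q * fs s :=
            hchain1
        _ ≤ ∑ k ∈ Finset.range N, 2 ^ q *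
              (2 ^ r * ∫ s in Ioc (v (k+1)) (v (k+2)), (F s / G s) ^ r * ψ s ^ p) := by
            refine Finset.sum_le_sum fun k _ => (hblockA k).trans ?_
            exact mul_le_mul_of_nonneg_left
              (claimB (v (k+1)) (v (k+2)) (hvt (k+1)) (hvmono (by omega : k+1 ≤ k+2))
                (hv2 (k+1))) h2q0.le
        _ = 2 ^ q * 2 ^ r * ∑ k ∈ Finset.range N,
              ∫ s in Ioc (v (k+1)) (v (k+2)), (F s / G s) ^ r * ψ s ^ p := by
            rw [Finset.mul_sum]
            exact Finset.sum_congr rfl fun k _ => by ring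
        _ = 2 ^ q * 2 ^ r * ∫ s in Ioc (v 1) (v (1+N)), (F s / G s) ^ r * ψ s ^ p := by
            rw [hchain2]
        _ ≤ 2 ^ q * 2 ^ r * I2 := by
            exact mul_le_mul_of_nonneg_left (hI2part (v 1) (v (1+N)) (hvt 1))
              (mul_pos h2q0 h2r0).le
    exact le_of_tendsto (hlim _ hI1Ioi) (Eventually.of_forall hN)
  -- pieces for claim C
  have hΦbound : ∀ k, F (v (k+1)) ^ r / G (v (k+1)) ^ q
      ≤ F t ^ r * (G (v (k+1)) ^ q)⁻¹
        + CL * ((∫ s in Ioc t (v (k+1)), F s ^ q * fs s) * (G (v (k+1)) ^ q)⁻¹) := by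
    intro k
    have hkey := keyL1 p hp fs F t ht hfs0 hfsint hF0 hFadd hFmono hFmeas hFcont
      t (v (k+1)) le_rfl (hvt (k+1))
    have hYq : (0:ℝ) < G (v (k+1)) ^ q := Real.rpow_pos_of_pos (hGvk (k+1)) q
    have h1 : F (v (k+1)) ^ r
        ≤ F t ^ r + CL * ∫ s in Ioc t (v (k+1)), F s ^ q * fs s := by
      rw [hCL]; linarith
    calc F (v (k+1)) ^ r / G (v (k+1)) ^ q
        ≤ (F t ^ r + CL * ∫ s in Ioc t (v (k+1)), F s ^ q * fs s) / G (v (k+1)) ^ q :=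
          (div_le_div_iff_of_pos_right hYq).2 h1
      _ = F t ^ r * (G (v (k+1)) ^ q)⁻¹
          + CL * ((∫ s in Ioc t (v (k+1)), F s ^ q * fs s) * (G (v (k+1)) ^ q)⁻¹) := by
          ring
  have hDsum : ∀ K : ℕ, (∫ s in Ioc t (v K), F s ^ q * fs s)
      = ∑ j ∈ Finset.range K, ∫ s in Ioc (v j) (v (j+1)), F s ^ q * fs s := by
    intro K
    have := chain_int (fun s => F s ^ q * fs s) t v hvt hvmono hFqfs 0 K
    simpa [hv0] using this
  have hepow : ∀ n : ℕ, (G (v n) ^ q)⁻¹ = θ ^ n * (G (v 0) ^ q)⁻¹ := by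
    intro n
    induction n with
    | zero => simp
    | succ n ih =>
      have : G (v (n+1)) ^ q = 2 ^ q * G (v n) ^ q := by
        rw [hv2 n, Real.mul_rpow (by norm_num : (0:ℝ) ≤ 2) (hGvk n).le]
      rw [this, mul_inv, ih, pow_succ, hθ, one_div]
      ring
  have hde : ∀ j, (∫ s in Ioc (v j) (v (j+1)), F s ^ q * fs s) * (G (v j) ^ q)⁻¹
      ≤ 2 ^ q * ∫ s in Ioc (v j) (v (j+1)), (F s / G s) ^ q * fs s := by
    intro j
    have heq : (∫ s in Ioc (v j) (v (j+1)), F s ^ q * fs s) * (G (v j) ^ q)⁻¹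
        = ∫ s in Ioc (v j) (v (j+1)), F s ^ q * fs s * (G (v j) ^ q)⁻¹ :=
      (integral_mul_const _ _).symm
    have heq2 : (2:ℝ) ^ q * (∫ s in Ioc (v j) (v (j+1)), (F s / G s) ^ q * fs s)
        = ∫ s in Ioc (v j) (v (j+1)), 2 ^ q * ((F s / G s) ^ q * fs s) :=
      (integral_const_mul _ _).symm
    rw [heq, heq2]
    refine setIntegral_mono_on
      ((hFqfs (v j) (v (j+1)) (hvt j) (hvadj j)).mul_const _)
      ((hI1sub (v j) (v (j+1)) (hvt j)).const_mul _) measurableSet_Ioc ?_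
    intro s hs
    have hGsp : 0 < G s := hGt.trans_le (hGmono ((hvt j).trans hs.1.le))
    have hGsq : 0 < G s ^ q := Real.rpow_pos_of_pos hGsp q
    have hYq : 0 < G (v j) ^ q := Real.rpow_pos_of_pos (hGvk j) q
    have hGs2 : G s ^ q ≤ 2 ^ q * G (v j) ^ q := by
      calc G s ^ q ≤ (2 * G (v j)) ^ q := by
            apply Real.rpow_le_rpow hGsp.le _ hq0.le
            rw [← hv2 j]; exact hGmono hs.2
        _ = 2 ^ q * G (v j) ^ q := Real.mul_rpow (by norm_num) (hGvk j).le
    have hinv : (G (v j) ^ q)⁻¹ ≤ 2 ^ q * (G s ^ q)⁻¹ := by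
      have h1 : (2 ^ q * G (v j) ^ q)⁻¹ ≤ (G s ^ q)⁻¹ := inv_anti₀ hGsq hGs2
      have h2 : (G (v j) ^ q)⁻¹ = 2 ^ q * (2 ^ q * G (v j) ^ q)⁻¹ := by
        field_simp
      rw [h2]
      exact mul_le_mul_of_nonneg_left h1 h2q0.le
    have hfss : 0 ≤ fs s := hfs0 s ((hv0pos j).trans hs.1)
    have hFsq : 0 ≤ F s ^ q := Real.rpow_nonneg (hF0 s) q
    calc F s ^ q * fs s * (G (v j) ^ q)⁻¹
        ≤ F s ^ q * fs s * (2 ^ q * (G s ^ q)⁻¹) := by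
          exact mul_le_mul_of_nonneg_left hinv (mul_nonneg hFsq hfss)
      _ = 2 ^ q * ((F s ^ q * (G s ^ q)⁻¹) * fs s) := by ring
      _ = 2 ^ q * ((F s / G s) ^ q * fs s) := by
          rw [Real.div_rpow (hF0 s) hGsp.le, div_eq_mul_inv]
  -- CLAIM C : I2 ≤ (2^q*S) * Φt + (2^q*CL*2^q*S) * I1
  have hBnn : ∀ j : ℕ, 0 ≤ ∫ s in Ioc (v j) (v (j+1)), (F s / G s) ^ q * fs s := by
    intro j
    refine setIntegral_nonneg measurableSet_Ioc fun s hs => ?_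
    exact hI1nnIoi s (lt_of_le_of_lt (hvt j) hs.1)
  have hgeo : ∀ j N : ℕ, ∑ k ∈ Finset.Ico j N, θ^(k+1-j) ≤ S := by
    intro j N
    rcases le_or_gt j N with hjN | hjN
    · rw [Finset.sum_Ico_eq_sum_range]
      have hcg : ∀ i ∈ Finset.range (N-j), θ^(j+i+1-j) = θ^i * θ := by
        intro i _
        rw [show j+i+1-j = i+1 by omega, pow_succ]
      rw [Finset.sum_congr rfl hcg, ← Finset.sum_mul]
      calc (∑ i ∈ Finset.range (N-j), θ^i) * θ ≤ (1/(1-θ)) * θ :=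
            mul_le_mul_of_nonneg_right (geom_bound hθ0.le hθ1 _) hθ0.le
        _ = S := by rw [hS]; ring
    · rw [Finset.Ico_eq_empty (by omega)]
      simpa using hS0.le
  have hsumC : ∀ N : ℕ, ∑ k ∈ Finset.range N,
        (∫ s in Ioc (v k) (v (k+1)), (F s / G s) ^ r * ψ s ^ p)
      ≤ 2^q * S * (F t ^ r * (G (v 0) ^ q)⁻¹)
        + 2^q * CL * (2^q * S * ∑ j ∈ Finset.range N,
            (∫ s in Ioc (v j) (v (j+1)), (F s / G s) ^ q * fs s)) := by
    intro N
    exact sumC_aux θ S CL (F t ^ r) (2^q)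
      (fun k => ∫ s in Ioc (v k) (v (k+1)), (F s / G s) ^ r * ψ s ^ p)
      (fun n => F (v n) ^ r / G (v n) ^ q)
      (fun n => (G (v n) ^ q)⁻¹)
      (fun j => ∫ s in Ioc (v j) (v (j+1)), F s ^ q * fs s)
      (fun j => ∫ s in Ioc (v j) (v (j+1)), (F s / G s) ^ q * fs s)
      (fun K => ∫ s in Ioc t (v K), F s ^ q * fs s)
      hθ0.le hblockC hΦbound hDsum hepow hde hBnn
      (inv_nonneg.2 (Real.rpow_nonneg (hG0 _) q))
      (Real.rpow_nonneg (hF0 t) r) hCL0.le h2q0.le hgeo N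
  have hBsum : ∀ N : ℕ, ∑ j ∈ Finset.range N,
        (∫ s in Ioc (v j) (v (j+1)), (F s / G s) ^ q * fs s) ≤ I1 := by
    intro N
    have hchain : (∫ s in Ioc t (v N), (F s / G s) ^ q * fs s)
        = ∑ j ∈ Finset.range N, ∫ s in Ioc (v j) (v (j+1)), (F s / G s) ^ q * fs s := by
      have := chain_int (fun s => (F s / G s) ^ q * fs s) t v hvt hvmono
        (fun a b hta _ => hI1sub a b hta) 0 N
      simpa [hv0] using this
    rw [← hchain]
    apply setIntegral_mono_set hI1Ioi
    · exact (ae_restrict_iff' measurableSet_Ioi).2 (Eventually.of_forall hI1nnIoi)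
    · exact HasSubset.Subset.eventuallyLE Ioc_subset_Ioi_self
  set Φt := F t ^ r / G t ^ q with hΦt
  have hΦt0 : 0 ≤ Φt := div_nonneg (Real.rpow_nonneg (hF0 t) r)
    (Real.rpow_nonneg (hG0 t) q)
  have hΦteq : F t ^ r * (G (v 0) ^ q)⁻¹ = Φt := by
    rw [hv0, hΦt, div_eq_mul_inv]
  have claimC : I2 ≤ 2^q * S * Φt + 2^q * CL * 2^q * S * I1 := by
    have hN : ∀ N : ℕ, (∫ s in Ioc t (v N), (F s / G s) ^ r * ψ s ^ p)
        ≤ 2^q * S * Φt + 2^q * CL * 2^q * S * I1 := by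
      intro N
      have hchain : (∫ s in Ioc t (v N), (F s / G s) ^ r * ψ s ^ p)
          = ∑ k ∈ Finset.range N, ∫ s in Ioc (v k) (v (k+1)), (F s / G s) ^ r * ψ s ^ p := by
        have := chain_int (fun s => (F s / G s) ^ r * ψ s ^ p) t v hvt hvmono
          (fun a b hta _ => hI2sub a b hta) 0 N
        simpa [hv0] using this
      rw [hchain]
      refine (hsumC N).trans ?_
      rw [hΦteq]
      have h1 : 2^q * S * ∑ j ∈ Finset.range N,
            (∫ s in Ioc (v j) (v (j+1)), (F s / G s) ^ q * fs s) ≤ 2^q * S * I1 :=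
        mul_le_mul_of_nonneg_left (hBsum N) (mul_pos h2q0 hS0).le
      have h2 : 2^q * CL * (2^q * S * ∑ j ∈ Finset.range N,
            (∫ s in Ioc (v j) (v (j+1)), (F s / G s) ^ q * fs s))
          ≤ 2^q * CL * (2^q * S * I1) :=
        mul_le_mul_of_nonneg_left h1 (mul_pos h2q0 hCL0).le
      nlinarith [h2]
    exact le_of_tendsto (hlim _ hI2Ioi) (Eventually.of_forall hN)
  -- the P * Φt^pe = F t identity
  have hGtq : 0 < G t ^ (1/p) := Real.rpow_pos_of_pos hGt _
  have hPΦ : G t ^ (1/p) * Φt ^ pe = F t := by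
    have h1 : (F t ^ r) ^ pe = F t := by
      rw [← Real.rpow_mul (hF0 t)]
      rw [show r * pe = 1 by rw [hr, hpe]; field_simp, Real.rpow_one]
    have h2 : (G t ^ q) ^ pe = G t ^ (1/p) := by
      rw [← Real.rpow_mul (hG0 t)]
      congr 1
      rw [hq, hpe]
      field_simp
    rw [hΦt, Real.div_rpow (Real.rpow_nonneg (hF0 t) r)
      (Real.rpow_nonneg (hG0 t) q), h1, h2]
    field_simp
  -- final assembly
  set M := 2^q * S + 2^q * CL * 2^q * S with hM
  have hM0 : 0 < M := by
    rw [hM]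
    exact add_pos (mul_pos h2q0 hS0) (mul_pos (mul_pos (mul_pos h2q0 hCL0) h2q0) hS0)
  have hMpe : 0 < M ^ pe := Real.rpow_pos_of_pos hM0 pe
  constructor
  · -- first inequality
    have hI2M : I2 ≤ M * (Φt + I1) := by
      have h1 : 2^q * S * Φt ≤ M * Φt := by
        apply mul_le_mul_of_nonneg_right _ hΦt0
        rw [hM]
        nlinarith [mul_pos (mul_pos (mul_pos h2q0 hCL0) h2q0) hS0]
      have h2 : 2^q * CL * 2^q * S * I1 ≤ M * I1 := by
        apply mul_le_mul_of_nonneg_right _ hI1nn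
        rw [hM]
        nlinarith [mul_pos h2q0 hS0]
      calc I2 ≤ 2^q * S * Φt + 2^q * CL * 2^q * S * I1 := claimC
        _ ≤ M * Φt + M * I1 := add_le_add h1 h2
        _ = M * (Φt + I1) := by ring
    have hstep : I2 ^ pe ≤ M ^ pe * (Φt ^ pe + I1 ^ pe) := by
      calc I2 ^ pe ≤ (M * (Φt + I1)) ^ pe :=
            Real.rpow_le_rpow hI2nn' hI2M hpe0.le
        _ = M ^ pe * (Φt + I1) ^ pe :=
            Real.mul_rpow hM0.le (add_nonneg hΦt0 hI1nn)
        _ ≤ M ^ pe * (Φt ^ pe + I1 ^ pe) :=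
            mul_le_mul_of_nonneg_left (rpow_subadd hΦt0 hI1nn hpe0.le hpe1) hMpe.le
    have hmain : G t ^ (1/p) * I2 ^ pe ≤ M ^ pe * (F t + G t ^ (1/p) * I1 ^ pe) := by
      calc G t ^ (1/p) * I2 ^ pe ≤ G t ^ (1/p) * (M ^ pe * (Φt ^ pe + I1 ^ pe)) :=
            mul_le_mul_of_nonneg_left hstep hGtq.le
        _ = M ^ pe * (G t ^ (1/p) * Φt ^ pe + G t ^ (1/p) * I1 ^ pe) := by ring
        _ = M ^ pe * (F t + G t ^ (1/p) * I1 ^ pe) := by rw [hPΦ]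
    calc (M ^ pe)⁻¹ * (G t ^ (1/p) * I2 ^ pe)
        ≤ (M ^ pe)⁻¹ * (M ^ pe * (F t + G t ^ (1/p) * I1 ^ pe)) :=
          mul_le_mul_of_nonneg_left hmain (inv_nonneg.2 hMpe.le)
      _ = F t + G t ^ (1/p) * I1 ^ pe := by
          rw [← mul_assoc, inv_mul_cancel₀ hMpe.ne', one_mul]
  · -- second inequality
    have hΦB : Φt ≤ 2 ^ r * I2 := by
      have hGv1 : G (v 1) = 2 * G t := by
        have h := hv2 0
        rwa [hv0] at h
      have h1 := claimB t (v 1) le_rfl (hvt 1) hGv1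
      rw [← hΦt] at h1
      refine h1.trans (mul_le_mul_of_nonneg_left ?_ h2r0.le)
      exact hI2part t (v 1) le_rfl
    have hFt : F t ≤ (2^r) ^ pe * (G t ^ (1/p) * I2 ^ pe) := by
      rw [← hPΦ]
      have h1 : Φt ^ pe ≤ (2^r * I2) ^ pe := Real.rpow_le_rpow hΦt0 hΦB hpe0.le
      have h2 : (2^r * I2 : ℝ) ^ pe = (2^r) ^ pe * I2 ^ pe :=
        Real.mul_rpow h2r0.le hI2nn'
      calc G t ^ (1/p) * Φt ^ pe ≤ G t ^ (1/p) * ((2^r) ^ pe * I2 ^ pe) := by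
            rw [← h2]; exact mul_le_mul_of_nonneg_left h1 hGtq.le
        _ = (2^r) ^ pe * (G t ^ (1/p) * I2 ^ pe) := by ring
    have hI1f : G t ^ (1/p) * I1 ^ pe
        ≤ (2^q * 2^r) ^ pe * (G t ^ (1/p) * I2 ^ pe) := by
      have h1 : I1 ^ pe ≤ (2^q * 2^r * I2) ^ pe :=
        Real.rpow_le_rpow hI1nn claimA hpe0.le
      have h2 : (2^q * 2^r * I2 : ℝ) ^ pe = (2^q * 2^r) ^ pe * I2 ^ pe :=
        Real.mul_rpow (mul_pos h2q0 h2r0).le hI2nn'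
      calc G t ^ (1/p) * I1 ^ pe ≤ G t ^ (1/p) * ((2^q * 2^r) ^ pe * I2 ^ pe) := by
            rw [← h2]; exact mul_le_mul_of_nonneg_left h1 hGtq.le
        _ = (2^q * 2^r) ^ pe * (G t ^ (1/p) * I2 ^ pe) := by ring
    calc F t + G t ^ (1/p) * I1 ^ pe
        ≤ (2^r) ^ pe * (G t ^ (1/p) * I2 ^ pe)
          + (2^q * 2^r) ^ pe * (G t ^ (1/p) * I2 ^ pe) := add_le_add hFt hI1f
      _ = ((2^r) ^ pe + (2^q * 2^r) ^ pe) * (G t ^ (1/p) * I2 ^ pe) := by ring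


theorem zeta_equiv (p : ℝ) (hp : 1 < p) :
    ∃ c₁ > (0 : ℝ), ∃ c₂ > (0 : ℝ), ∀ ψ fs : ℝ → ℝ,
      Measurable ψ → (∀ x, 0 ≤ ψ x) →
      (∀ x ∈ Ioi (0 : ℝ), 0 ≤ fs x) → AntitoneOn fs (Ioi (0 : ℝ)) →
      (∀ t > (0 : ℝ), IntegrableOn fs (Ioc (0 : ℝ) t)) →
      (∀ t > (0 : ℝ), IntegrableOn (fun x => ψ x ^ p) (Ioc (0 : ℝ) t)) →
      (∀ t > (0 : ℝ), 0 < ∫ x in Ioc (0 : ℝ) t, ψ x ^ p) →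
      Filter.Tendsto (fun s => ∫ x in Ioc (0 : ℝ) s, ψ x ^ p)
        Filter.atTop Filter.atTop →
      Filter.Tendsto
        (fun s => (∫ τ in Ioc (0 : ℝ) s, fs τ) ^ (p / (p - 1)) *
          (∫ x in Ioc (0 : ℝ) s, ψ x ^ p) ^ (-(1 / (p - 1))))
        Filter.atTop (nhds 0) →
      (∀ t > (0 : ℝ), IntegrableOn
        (fun s => ((∫ τ in Ioc (0 : ℝ) s, fs τ) / (∫ x in Ioc (0 : ℝ) s, ψ x ^ p))
          ^ (1 / (p - 1)) * fs s) (Ioi t)) →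
      (∀ t > (0 : ℝ), IntegrableOn
        (fun s => ((∫ τ in Ioc (0 : ℝ) s, fs τ) / (∫ x in Ioc (0 : ℝ) s, ψ x ^ p))
          ^ (p / (p - 1)) * ψ s ^ p) (Ioi t)) →
      ∀ t > (0 : ℝ),
        -- ζ(t) = t f**(t) + Ψ_p(t) (∫ₜ^∞ (s f**(s)/Ψ_p(s)^p)^{1/(p-1)} f*(s) ds)^{1/p'}
        -- ζ₁(t) = Ψ_p(t) (∫ₜ^∞ (s f**(s)/Ψ_p(s)^p)^{p'} ψ(s)^p ds)^{1/p'},  ζ ≈ ζ₁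
        (c₁ * ((∫ x in Ioc (0 : ℝ) t, ψ x ^ p) ^ (1 / p) *
            (∫ s in Ioi t, ((∫ τ in Ioc (0 : ℝ) s, fs τ) / (∫ x in Ioc (0 : ℝ) s, ψ x ^ p))
              ^ (p / (p - 1)) * ψ s ^ p) ^ ((p - 1) / p))
          ≤ (∫ τ in Ioc (0 : ℝ) t, fs τ) +
            (∫ x in Ioc (0 : ℝ) t, ψ x ^ p) ^ (1 / p) *
              (∫ s in Ioi t, ((∫ τ in Ioc (0 : ℝ) s, fs τ) / (∫ x in Ioc (0 : ℝ) s, ψ x ^ p))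
                ^ (1 / (p - 1)) * fs s) ^ ((p - 1) / p)) ∧
        ((∫ τ in Ioc (0 : ℝ) t, fs τ) +
            (∫ x in Ioc (0 : ℝ) t, ψ x ^ p) ^ (1 / p) *
              (∫ s in Ioi t, ((∫ τ in Ioc (0 : ℝ) s, fs τ) / (∫ x in Ioc (0 : ℝ) s, ψ x ^ p))
                ^ (1 / (p - 1)) * fs s) ^ ((p - 1) / p)
          ≤ c₂ * ((∫ x in Ioc (0 : ℝ) t, ψ x ^ p) ^ (1 / p) *
              (∫ s in Ioi t, ((∫ τ in Ioc (0 : ℝ) s, fs τ) / (∫ x in Ioc (0 : ℝ) s, ψ x ^ p))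
                ^ (p / (p - 1)) * ψ s ^ p) ^ ((p - 1) / p))) := by
  
  have hp1 : 0 < p - 1 := by linarith
  have hp0 : 0 < p := by linarith
  have hq0 : 0 < 1/(p-1) := by positivity
  have h2q1 : 1 < (2:ℝ) ^ (1/(p-1)) := by
    rw [Real.one_lt_rpow_iff_of_pos (by norm_num : (0:ℝ) < 2)]
    left; exact ⟨by norm_num, hq0⟩
  have h2q0 : (0:ℝ) < 2 ^ (1/(p-1)) := Real.rpow_pos_of_pos (by norm_num) _
  have h2r0 : (0:ℝ) < 2 ^ (p/(p-1)) := Real.rpow_pos_of_pos (by norm_num) _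
  have hS0 : 0 < (1/(2:ℝ)^(1/(p-1)))/(1 - 1/(2:ℝ)^(1/(p-1))) := by
    apply div_pos (by positivity)
    rw [sub_pos, div_lt_one h2q0]; exact h2q1
  have hCL0 : 0 < (p/(p-1)) * (2:ℝ)^(p/(p-1)) := by positivity
  have hM0 : 0 < (2:ℝ)^(1/(p-1)) * ((1/(2:ℝ)^(1/(p-1)))/(1 - 1/(2:ℝ)^(1/(p-1))))
      + (2:ℝ)^(1/(p-1)) * ((p/(p-1)) * (2:ℝ)^(p/(p-1))) * (2:ℝ)^(1/(p-1))
        * ((1/(2:ℝ)^(1/(p-1)))/(1 - 1/(2:ℝ)^(1/(p-1)))) :=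
    add_pos (mul_pos h2q0 hS0) (mul_pos (mul_pos (mul_pos h2q0 hCL0) h2q0) hS0)
  refine ⟨(((2:ℝ)^(1/(p-1)) * ((1/(2:ℝ)^(1/(p-1)))/(1 - 1/(2:ℝ)^(1/(p-1))))
        + (2:ℝ)^(1/(p-1)) * ((p/(p-1)) * (2:ℝ)^(p/(p-1))) * (2:ℝ)^(1/(p-1))
          * ((1/(2:ℝ)^(1/(p-1)))/(1 - 1/(2:ℝ)^(1/(p-1))))) ^ ((p-1)/p))⁻¹,
    inv_pos.2 (Real.rpow_pos_of_pos hM0 ((p-1)/p)),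
    ((2:ℝ)^(p/(p-1)))^((p-1)/p) + ((2:ℝ)^(1/(p-1)) * (2:ℝ)^(p/(p-1)))^((p-1)/p),
    add_pos (Real.rpow_pos_of_pos h2r0 _)
      (Real.rpow_pos_of_pos (mul_pos h2q0 h2r0) _), ?_⟩
  intro ψ fs _hψm hψ0 hfs0 _hfsanti hfsint hψpint hGpos hGtop _hlim hI1int hI2int t ht
  exact zeta_main p hp ψ fs hψ0 hfs0 hfsint hψpint hGpos hGtop hI1int hI2int t ht
end
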